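/- Let m ≥ 1 be an integer, ζ ∈ {0,1}, and n = m + ζ. Then for every integer i with 0 ≤ i < n, (2n−i)²/(4n) − 2·⌈(m−i)/2⌉ = i²/(4n) + ζ − θ(n−ζ−i), where θ(k) ∈ {0,1} denotes the reduction of the integer k modulo 2. -/

import Mathlib

lemma ceil_int_div_two (k : ℤ) : (⌈((k : ℤ) : ℚ) / 2⌉ : ℤ) = -((-k) / 2) := by
  rw [show ((k : ℤ) : ℚ) / 2 = -(((-k : ℤ) : ℚ) / ((2 : ℕ) : ℚ)) by push_cast; ring,
    Int.ceil_neg, Rat.floor_intCast_div_natCast]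
  norm_num

/-- Computation (7.5) of the correction terms of `S³_{T(2m+1,2)}(4n)`: for `m ≥ 1`,
`ζ ∈ {0,1}`, `n = m + ζ`, and `0 ≤ i < n`,
`(2n−i)²/(4n) − 2·⌈(m−i)/2⌉ = i²/(4n) + ζ − θ(n−ζ−i)`, where `θ(k) = k mod 2 ∈ {0,1}`. -/
theorem stmt_11 (m : ℤ) (hm : 1 ≤ m) (ζ : ℤ) (hζ : ζ = 0 ∨ ζ = 1) (n : ℤ) (hn : n = m + ζ)
    (i : ℤ) (hi0 : 0 ≤ i) (hin : i < n) :
    ((2 * n - i : ℤ) : ℚ) ^ 2 / (4 * (n : ℚ)) - 2 * (⌈((m - i : ℤ) : ℚ) / 2⌉ : ℚ) =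
      ((i : ℤ) : ℚ) ^ 2 / (4 * (n : ℚ)) + (ζ : ℚ) - (((n - ζ - i) % 2 : ℤ) : ℚ) := by
  have hn0 : (n : ℚ) ≠ 0 := by
    have : 0 < n := by omega
    exact_mod_cast this.ne'
  rw [ceil_int_div_two]
  have key : (2 * n - i) ^ 2 - 2 * (-(((i - m)) / 2)) * (4 * n) =
      i ^ 2 + ζ * (4 * n) - ((n - ζ - i) % 2) * (4 * n) := by
    have h2 : (i - m) % 2 = (n - ζ - i) % 2 := by omega
    have := Int.emod_add_mul_ediv ((i - m)) 2
    nlinarith [Int.emod_emod_of_dvd (n - ζ - i) (dvd_refl 2)]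
  have keyQ : (((2 * n - i : ℤ) : ℚ)) ^ 2 - 2 * ((-(((i - m)) / 2) : ℤ) : ℚ) * (4 * n) =
      ((i : ℤ) : ℚ) ^ 2 + (ζ : ℚ) * (4 * n) - (((n - ζ - i) % 2 : ℤ) : ℚ) * (4 * n) := by
    exact_mod_cast congrArg (fun z : ℤ => (z : ℚ)) key
  field_simp
  push_cast at keyQ ⊢
  rw [neg_sub]
  linarith
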